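/- Let u, B, ρ, S, T, h be smooth fields on ℝ × ℝ³ with ρ > 0 everywhere, let μ₀ > 0 be a constant, and set ω = ∇×u. Assume Faraday's equation ∂B/∂t − ∇×(u×B) = 0, Gauss's law ∇·B = 0, the MHD momentum equation ∂u/∂t − u×ω + ∇(h + |u|²/2) − ((∇×B)×B)/(μ₀ρ) = T∇S, and that the magnetic field lies in the constant-entropy surfaces, i.e. B·∇S = 0 everywhere. Then the cross helicity density h_c = u·B satisfies the local conservation law ∂h_c/∂t + ∇·[ u h_c + (h − |u|²/2) B ] = 0. -/

import Mathlib

noncomputable section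

/-- Vectors in ℝ³. -/
abbrev Vec3 : Type := Fin 3 → ℝ

/-- Points of space-time: `(t, x)` with `t : ℝ`, `x : Fin 3 → ℝ`. -/
abbrev Pt : Type := ℝ × Vec3

/-- Euclidean dot product on ℝ³. -/
def dot3 (a b : Vec3) : ℝ := ∑ i, a i * b i

/-- Cross product on ℝ³. -/
def cross3 (a b : Vec3) : Vec3 :=
  ![a 1 * b 2 - a 2 * b 1, a 2 * b 0 - a 0 * b 2, a 0 * b 1 - a 1 * b 0]

/-- Spatial partial derivative ∂f/∂xᵢ of a scalar field. -/
def pd (i : Fin 3) (f : Pt → ℝ) (p : Pt) : ℝ :=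
  fderiv ℝ (fun x => f (p.1, x)) p.2 (Pi.single i 1)

/-- Time derivative ∂f/∂t of a scalar field. -/
def dt (f : Pt → ℝ) (p : Pt) : ℝ := deriv (fun s => f (s, p.2)) p.1

/-- Time derivative of a vector field, componentwise. -/
def dtVec (F : Pt → Vec3) (p : Pt) : Vec3 := fun i => dt (fun q => F q i) p

/-- Spatial gradient ∇f of a scalar field. -/
def grad3 (f : Pt → ℝ) (p : Pt) : Vec3 := fun i => pd i f p

/-- Spatial divergence ∇·F of a vector field. -/
def div3 (F : Pt → Vec3) (p : Pt) : ℝ := ∑ i, pd i (fun q => F q i) p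

/-- Spatial curl ∇×F of a vector field. -/
def curl3 (F : Pt → Vec3) (p : Pt) : Vec3 :=
  ![pd 1 (fun q => F q 2) p - pd 2 (fun q => F q 1) p,
    pd 2 (fun q => F q 0) p - pd 0 (fun q => F q 2) p,
    pd 0 (fun q => F q 1) p - pd 1 (fun q => F q 0) p]

/-- Directional derivative (u·∇)f of a scalar field. -/
def dirD (u : Pt → Vec3) (f : Pt → ℝ) (p : Pt) : ℝ := ∑ i, u p i * pd i f p

/-- Directional derivative (u·∇)F of a vector field. -/
def dirDVec (u F : Pt → Vec3) (p : Pt) : Vec3 :=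
  fun j => ∑ i, u p i * pd i (fun q => F q j) p

/-- (∇u)ᵀ·A, the vector with i-th component ∑ⱼ (∂uʲ/∂xⁱ) Aⱼ. -/
def gradTdot (u A : Pt → Vec3) (p : Pt) : Vec3 :=
  fun i => ∑ j, pd i (fun q => u q j) p * A p j

/-- A field is smooth when it is C^∞ jointly in time and space. -/
def SmoothS (f : Pt → ℝ) : Prop := ContDiff ℝ (⊤ : ℕ∞) f

/-- A vector field is smooth when it is C^∞ jointly in time and space. -/
def SmoothV (F : Pt → Vec3) : Prop := ContDiff ℝ (⊤ : ℕ∞) F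

section Aux

lemma diffSpace {f : Pt → ℝ} (hf : ContDiff ℝ (⊤:ℕ∞) f) (p : Pt) :
    DifferentiableAt ℝ (fun x : Vec3 => f (p.1, x)) p.2 :=
  ((hf.comp (ContDiff.prodMk contDiff_const contDiff_id)).differentiable
    (by simp)).differentiableAt

lemma diffTime {f : Pt → ℝ} (hf : ContDiff ℝ (⊤:ℕ∞) f) (p : Pt) :
    DifferentiableAt ℝ (fun s : ℝ => f (s, p.2)) p.1 :=
  ((hf.comp (ContDiff.prodMk contDiff_id contDiff_const)).differentiable
    (by simp)).differentiableAt

lemma pd_add {f g : Pt → ℝ} (hf : ContDiff ℝ (⊤:ℕ∞) f) (hg : ContDiff ℝ (⊤:ℕ∞) g)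
    (i : Fin 3) (p : Pt) : pd i (fun q => f q + g q) p = pd i f p + pd i g p := by
  unfold pd
  rw [fderiv_fun_add (diffSpace hf p) (diffSpace hg p)]; rfl

lemma pd_sub {f g : Pt → ℝ} (hf : ContDiff ℝ (⊤:ℕ∞) f) (hg : ContDiff ℝ (⊤:ℕ∞) g)
    (i : Fin 3) (p : Pt) : pd i (fun q => f q - g q) p = pd i f p - pd i g p := by
  unfold pd
  rw [fderiv_fun_sub (diffSpace hf p) (diffSpace hg p)]; rfl

lemma pd_mul {f g : Pt → ℝ} (hf : ContDiff ℝ (⊤:ℕ∞) f) (hg : ContDiff ℝ (⊤:ℕ∞) g)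
    (i : Fin 3) (p : Pt) :
    pd i (fun q => f q * g q) p = f p * pd i g p + pd i f p * g p := by
  unfold pd
  rw [fderiv_fun_mul (diffSpace hf p) (diffSpace hg p)]
  simp [smul_eq_mul]; ring

lemma pd_div_const {f : Pt → ℝ} (hf : ContDiff ℝ (⊤:ℕ∞) f) (c : ℝ)
    (i : Fin 3) (p : Pt) : pd i (fun q => f q / c) p = pd i f p / c := by
  unfold pd
  rw [show (fun x : Vec3 => f (p.1, x) / c) = (fun x : Vec3 => f (p.1, x) * c⁻¹) from
    funext fun x => div_eq_mul_inv _ _, fderiv_mul_const (diffSpace hf p)]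
  simp [div_eq_mul_inv, mul_comm]

lemma dt_add {f g : Pt → ℝ} (hf : ContDiff ℝ (⊤:ℕ∞) f) (hg : ContDiff ℝ (⊤:ℕ∞) g)
    (p : Pt) : dt (fun q => f q + g q) p = dt f p + dt g p := by
  unfold dt; exact deriv_add (diffTime hf p) (diffTime hg p)

lemma dt_mul {f g : Pt → ℝ} (hf : ContDiff ℝ (⊤:ℕ∞) f) (hg : ContDiff ℝ (⊤:ℕ∞) g)
    (p : Pt) : dt (fun q => f q * g q) p = dt f p * g p + f p * dt g p := by
  unfold dt; exact deriv_mul (diffTime hf p) (diffTime hg p)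

end Aux

/-- if in addition B·∇S = 0, the cross helicity density obeys
    a local conservation law. -/
theorem cross_helicity_conservation
    (u B : Pt → Vec3) (ρ S T h : Pt → ℝ) (μ₀ : ℝ)
    (hu : SmoothV u) (hB : SmoothV B) (hρ : SmoothS ρ)
    (hS : SmoothS S) (hT : SmoothS T) (hh : SmoothS h)
    (hρpos : ∀ p : Pt, 0 < ρ p) (hμ₀ : 0 < μ₀)
    (hfar : ∀ p : Pt,
      dtVec B p - curl3 (fun q => cross3 (u q) (B q)) p = 0)
    (hgauss : ∀ p : Pt, div3 B p = 0)
    (hmom : ∀ p : Pt,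
      dtVec u p - cross3 (u p) (curl3 u p)
        + grad3 (fun q => h q + dot3 (u q) (u q) / 2) p
        - (μ₀ * ρ p)⁻¹ • cross3 (curl3 B p) (B p)
        = T p • grad3 S p)
    (hBS : ∀ p : Pt, dot3 (B p) (grad3 S p) = 0) :
    ∀ p : Pt,
      dt (fun q => dot3 (u q) (B q)) p
        + div3 (fun q =>
            dot3 (u q) (B q) • u q
              + (h q - dot3 (u q) (u q) / 2) • B q) p = 0 := by
  intro p
  have hu' : ContDiff ℝ (⊤:ℕ∞) u := hu
  have hB' : ContDiff ℝ (⊤:ℕ∞) B := hB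
  have hh' : ContDiff ℝ (⊤:ℕ∞) h := hh
  have hF := sub_eq_zero.mp (hfar p)
  have hF0 := congrFun hF 0
  have hF1 := congrFun hF 1
  have hF2 := congrFun hF 2
  have hM0 := congrFun (hmom p) 0
  have hM1 := congrFun (hmom p) 1
  have hM2 := congrFun (hmom p) 2
  have hG := hgauss p
  have hS' := hBS p
  simp only [dtVec, curl3, cross3, grad3, dot3, div3, Fin.sum_univ_three,
    Matrix.cons_val_zero, Matrix.cons_val_one, Matrix.head_cons,
    Matrix.cons_val_two, Matrix.tail_cons, Pi.add_apply, Pi.sub_apply,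
    Pi.smul_apply, smul_eq_mul] at hF0 hF1 hF2 hM0 hM1 hM2 hG hS' ⊢
  simp (disch := fun_prop (disch := norm_num)) only
    [pd_sub, pd_add, pd_mul, pd_div_const, dt_add, dt_mul]
    at hF0 hF1 hF2 hM0 hM1 hM2 ⊢
  linear_combination B p 0 * hM0 + B p 1 * hM1 + B p 2 * hM2
    + u p 0 * hF0 + u p 1 * hF1 + u p 2 * hF2
    + (h p + (u p 0 * u p 0 + u p 1 * u p 1 + u p 2 * u p 2) / 2) * hG
    + T p * hS'
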